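/- arXiv:1907.13502 — 5 statements merged into one kernel-verified Lean document; each statement's English description precedes it below -/
import Mathlib

section
/- Let 0 < r < s. Then cosh(s)/cosh(r) < e^{s-r} < sinh(s)/sinh(r). -/
open Real

theorem cosh_sinh_exp_growth (r s : ℝ) (hr : 0 < r) (hrs : r < s) :
    Real.cosh s / Real.cosh r < Real.exp (s - r) ∧
    Real.exp (s - r) < Real.sinh s / Real.sinh r := by
  have hcr : 0 < Real.cosh r := Real.cosh_pos r
  have hsr : 0 < Real.sinh r := by positivity
  have key : Real.exp (-s) < Real.exp (s - 2*r) := by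
    apply Real.exp_lt_exp.mpr; linarith
  have h1 : Real.exp (s - r) * Real.exp r = Real.exp s := by
    rw [← Real.exp_add]; ring_nf
  have h2 : Real.exp (s - r) * Real.exp (-r) = Real.exp (s - 2*r) := by
    rw [← Real.exp_add]; ring_nf
  constructor
  · rw [div_lt_iff₀ hcr, Real.cosh_eq, Real.cosh_eq]
    nlinarith
  · rw [lt_div_iff₀ hsr, Real.sinh_eq, Real.sinh_eq]
    nlinarith
end

section
/- Define f(s,z) = cosh(s) - z^{-1} sinh(s). Suppose 0 < s ≤ s_max and tanh(s_max) ≤ z_min ≤ tanh(r) for real numbers s_max, z_min, r with r > 0. Then sinh(r-s) ≥ sinh(r)·f(s_max, z_min) ≥ e^r · (z_min/(1+z_min)) · f(s_max, z_min). -/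
open Real

/-- f(s,z) = cosh s − z⁻¹ · sinh s -/
noncomputable def fSinhDiff (s z : ℝ) : ℝ := Real.cosh s - Real.sinh s / z

theorem sinh_diff_bound (s smax zmin r : ℝ)
    (hs : 0 < s) (hsmax : s ≤ smax)
    (h1 : Real.tanh smax ≤ zmin) (h2 : zmin ≤ Real.tanh r) (hr : 0 < r) :
    Real.sinh r * fSinhDiff smax zmin ≤ Real.sinh (r - s) ∧
    Real.exp r * (zmin / (1 + zmin)) * fSinhDiff smax zmin ≤
      Real.sinh r * fSinhDiff smax zmin := by
  have hsm : 0 < smax := lt_of_lt_of_le hs hsmax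
  have hcm : 0 < Real.cosh smax := Real.cosh_pos smax
  have hcr : 0 < Real.cosh r := Real.cosh_pos r
  have hss : 0 < Real.sinh s := Real.sinh_pos_iff.mpr hs
  have hssm : Real.sinh s ≤ Real.sinh smax := Real.sinh_le_sinh.mpr hsmax
  have hsr : 0 < Real.sinh r := Real.sinh_pos_iff.mpr hr
  -- zmin positivity
  have htm : 0 < Real.tanh smax := by
    rw [Real.tanh_eq_sinh_div_cosh]
    exact div_pos (Real.sinh_pos_iff.mpr hsm) hcm
  have hz : 0 < zmin := lt_of_lt_of_le htm h1
  -- h1 in product form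
  have h1' : Real.sinh smax ≤ zmin * Real.cosh smax := by
    rw [Real.tanh_eq_sinh_div_cosh, div_le_iff₀ hcm] at h1
    linarith
  -- h2 in product form
  have h2' : zmin * Real.cosh r ≤ Real.sinh r := by
    rw [Real.tanh_eq_sinh_div_cosh, le_div_iff₀ hcr] at h2
    linarith
  -- zmin ≤ 1
  have hsrcr : Real.sinh r < Real.cosh r := by
    nlinarith [Real.cosh_sub_sinh r, Real.exp_pos (-r)]
  have hz1 : zmin ≤ 1 := by nlinarith
  -- cosh smax - cosh s ≤ sinh smax - sinh s
  have hkey : Real.cosh smax - Real.cosh s ≤ Real.sinh smax - Real.sinh s := by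
    have e1 := Real.cosh_sub_sinh smax
    have e2 := Real.cosh_sub_sinh s
    have : Real.exp (-smax) ≤ Real.exp (-s) := Real.exp_le_exp.mpr (by linarith)
    linarith
  -- f nonneg
  have hf : 0 ≤ fSinhDiff smax zmin := by
    unfold fSinhDiff
    rw [sub_nonneg, div_le_iff₀ hz]
    nlinarith
  constructor
  · rw [Real.sinh_sub]
    unfold fSinhDiff
    apply le_of_mul_le_mul_right _ hz
    have hexp : (Real.cosh smax - Real.sinh smax / zmin) * zmin
        = Real.cosh smax * zmin - Real.sinh smax := by
      field_simp
    rw [mul_assoc, hexp]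
    nlinarith [mul_pos hsr hss, mul_le_mul_of_nonneg_left hkey (le_of_lt (mul_pos hz hsr)),
      mul_le_mul_of_nonneg_right h2' hss.le,
      mul_nonneg (mul_nonneg hsr.le (sub_nonneg.mpr hssm)) (sub_nonneg.mpr hz1)]
  · apply mul_le_mul_of_nonneg_right _ hf
    rw [← mul_div_assoc, div_le_iff₀ (by positivity : (0:ℝ) < 1 + zmin)]
    have := Real.cosh_add_sinh r
    nlinarith
end

section
/- Define Sab(x,y) = (sinh x · cosh x · sinh² y)/(sinh(x+y) · cosh(x+y)) for x, y > 0. Then Sab is strictly increasing in each variable: ∂Sab/∂x = sinh(2y)(cosh(2y)−1)/sinh²(2x+2y) > 0 and ∂Sab/∂y = (cosh(2x+2y) − cosh(2y)) · sinh(2x)/sinh²(2x+2y) > 0. -/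
open Real

/-- Sab(x,y) = sinh x · cosh x · sinh² y / (sinh(x+y) · cosh(x+y)) -/
noncomputable def Sab (x y : ℝ) : ℝ :=
  Real.sinh x * Real.cosh x * (Real.sinh y) ^ 2 /
    (Real.sinh (x + y) * Real.cosh (x + y))

lemma core_x (p q r : ℝ) (hp : 0 < p) (hpq : p < q) (hr : 0 < r) :
    Real.sinh p * Real.sinh (q + r) < Real.sinh q * Real.sinh (p + r) := by
  have h1 := Real.sinh_add q r
  have h2 := Real.sinh_add p r
  have h3 : Real.sinh (p - q) < 0 := Real.sinh_neg_iff.mpr (by linarith)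
  have h4 := Real.sinh_sub p q
  have hsr : 0 < Real.sinh r := Real.sinh_pos_iff.mpr hr
  have h5 : Real.sinh r * Real.sinh (p - q) =
      Real.sinh r * (Real.sinh p * Real.cosh q - Real.cosh p * Real.sinh q) := by rw [h4]
  rw [h1, h2]
  nlinarith [h5, mul_neg_of_pos_of_neg hsr h3]

lemma core_y (a b X : ℝ) (ha : 0 < a) (hab : a < b) (hX : 0 < X) :
    (Real.cosh a - 1) * Real.sinh (X + b) < (Real.cosh b - 1) * Real.sinh (X + a) := by
  have h1 := Real.sinh_add X b
  have h2 := Real.sinh_add X a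
  have h3 : Real.sinh b = Real.sinh (b - a) * Real.cosh a + Real.cosh (b - a) * Real.sinh a := by
    have := Real.sinh_add (b - a) a; simpa using this
  have hsub := Real.sinh_sub b a
  have hca : 1 < Real.cosh a := Real.one_lt_cosh.mpr ha.ne'
  have hcb : Real.cosh a < Real.cosh b := by
    rw [Real.cosh_lt_cosh, abs_of_pos ha, abs_of_pos (by linarith)]; exact hab
  have hcba : 1 < Real.cosh (b - a) :=
    Real.one_lt_cosh.mpr (show b - a ≠ 0 from (by linarith : (0:ℝ) < b - a).ne')
  have hsba : 0 < Real.sinh (b - a) := Real.sinh_pos_iff.mpr (by linarith)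
  have hsa : 0 < Real.sinh a := Real.sinh_pos_iff.mpr ha
  have hsX : 0 < Real.sinh X := Real.sinh_pos_iff.mpr hX
  have hcX : 0 < Real.cosh X := Real.cosh_pos X
  -- sinh b - sinh a > sinh (b - a)
  have key : Real.sinh (b - a) < Real.sinh b - Real.sinh a := by
    nlinarith [mul_pos hsba (sub_pos.mpr hca), mul_pos hsa (sub_pos.mpr hcba)]
  have hA : Real.sinh X * (Real.cosh a - Real.cosh b) < 0 :=
    mul_neg_of_pos_of_neg hsX (by linarith)
  have hB : Real.cosh X * (Real.sinh (b - a) - Real.sinh b + Real.sinh a) < 0 :=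
    mul_neg_of_pos_of_neg hcX (by linarith)
  have hB' : Real.cosh X * (Real.sinh b * Real.cosh a - Real.cosh b * Real.sinh a
      - Real.sinh b + Real.sinh a) < 0 := by rw [← hsub]; exact hB
  rw [h1, h2]
  nlinarith [hA, hB']

theorem Sab_strict_mono :
    (∀ x x' y : ℝ, 0 < x → x < x' → 0 < y → Sab x y < Sab x' y) ∧
    (∀ x y y' : ℝ, 0 < x → 0 < y → y < y' → Sab x y < Sab x y') := by
  constructor
  · intro x x' y hx hxx hy
    have hxy : 0 < x + y := by linarith
    have hx'y : 0 < x' + y := by linarith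
    have hD : 0 < Real.sinh (x + y) * Real.cosh (x + y) :=
      mul_pos (Real.sinh_pos_iff.mpr hxy) (Real.cosh_pos _)
    have hD' : 0 < Real.sinh (x' + y) * Real.cosh (x' + y) :=
      mul_pos (Real.sinh_pos_iff.mpr hx'y) (Real.cosh_pos _)
    rw [Sab, Sab, div_lt_div_iff₀ hD hD']
    have core := core_x (2 * x) (2 * x') (2 * y) (by linarith) (by linarith) (by linarith)
    have e1 : Real.sinh (2 * x) = 2 * Real.sinh x * Real.cosh x := Real.sinh_two_mul x
    have e2 : Real.sinh (2 * x') = 2 * Real.sinh x' * Real.cosh x' := Real.sinh_two_mul x'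
    have e3 : Real.sinh (2 * x' + 2 * y) = 2 * Real.sinh (x' + y) * Real.cosh (x' + y) := by
      rw [show 2 * x' + 2 * y = 2 * (x' + y) by ring]; exact Real.sinh_two_mul _
    have e4 : Real.sinh (2 * x + 2 * y) = 2 * Real.sinh (x + y) * Real.cosh (x + y) := by
      rw [show 2 * x + 2 * y = 2 * (x + y) by ring]; exact Real.sinh_two_mul _
    rw [e1, e2, e3, e4] at core
    have hsy2 : 0 < Real.sinh y ^ 2 := by positivity
    nlinarith [mul_lt_mul_of_pos_left core hsy2]
  · intro x y y' hx hy hyy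
    have hxy : 0 < x + y := by linarith
    have hxy' : 0 < x + y' := by linarith
    have hD : 0 < Real.sinh (x + y) * Real.cosh (x + y) :=
      mul_pos (Real.sinh_pos_iff.mpr hxy) (Real.cosh_pos _)
    have hD' : 0 < Real.sinh (x + y') * Real.cosh (x + y') :=
      mul_pos (Real.sinh_pos_iff.mpr hxy') (Real.cosh_pos _)
    rw [Sab, Sab, div_lt_div_iff₀ hD hD']
    have core := core_y (2 * y) (2 * y') (2 * x) (by linarith) (by linarith) (by linarith)
    have e1 : Real.cosh (2 * y) - 1 = 2 * Real.sinh y ^ 2 := by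
      have h := Real.cosh_sq y
      rw [Real.cosh_two_mul]; nlinarith
    have e2 : Real.cosh (2 * y') - 1 = 2 * Real.sinh y' ^ 2 := by
      have h := Real.cosh_sq y'
      rw [Real.cosh_two_mul]; nlinarith
    have e3 : Real.sinh (2 * x + 2 * y') = 2 * Real.sinh (x + y') * Real.cosh (x + y') := by
      rw [show 2 * x + 2 * y' = 2 * (x + y') by ring]; exact Real.sinh_two_mul _
    have e4 : Real.sinh (2 * x + 2 * y) = 2 * Real.sinh (x + y) * Real.cosh (x + y) := by
      rw [show 2 * x + 2 * y = 2 * (x + y) by ring]; exact Real.sinh_two_mul _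
    rw [e3, e4, e1, e2] at core
    have hsx : 0 < Real.sinh x := Real.sinh_pos_iff.mpr hx
    have hcx : 0 < Real.cosh x := Real.cosh_pos x
    have h2m : Real.sinh (2 * x) = 2 * Real.sinh x * Real.cosh x := Real.sinh_two_mul x
    nlinarith [mul_lt_mul_of_pos_left core (mul_pos hsx hcx)]
end

section
/- For fixed x > 0, the function y ↦ sinh(x)·sinh(y)/sinh(x+y) is strictly increasing in y on (0,∞), and for fixed y > 0 it is strictly increasing in x on (0,∞). -/
open Real

lemma aux_mono (x a b : ℝ) (hx : 0 < x) (ha : 0 < a) (hab : a < b) :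
    Real.sinh x * Real.sinh a / Real.sinh (x + a) <
      Real.sinh x * Real.sinh b / Real.sinh (x + b) := by
  have sx := Real.sinh_pos_iff.2 hx
  have h1 := Real.sinh_pos_iff.2 (by linarith : (0:ℝ) < x + a)
  have h2 := Real.sinh_pos_iff.2 (by linarith : (0:ℝ) < x + b)
  have h3 := Real.sinh_pos_iff.2 (by linarith : (0:ℝ) < b - a)
  rw [div_lt_div_iff₀ h1 h2]
  rw [Real.sinh_sub] at h3
  rw [Real.sinh_add, Real.sinh_add]
  nlinarith [mul_pos (mul_pos sx sx) h3, mul_pos sx h3]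

theorem ellipse_axis_mono :
    (∀ x y y' : ℝ, 0 < x → 0 < y → y < y' →
      Real.sinh x * Real.sinh y / Real.sinh (x + y) <
        Real.sinh x * Real.sinh y' / Real.sinh (x + y')) ∧
    (∀ x x' y : ℝ, 0 < x → x < x' → 0 < y →
      Real.sinh x * Real.sinh y / Real.sinh (x + y) <
        Real.sinh x' * Real.sinh y / Real.sinh (x' + y)) := by
  constructor
  · exact fun x y y' hx hy hyy' => aux_mono x y y' hx hy hyy'
  · intro x x' y hx hxx' hy
    have := aux_mono y x x' hy hx hxx'
    rw [mul_comm (Real.sinh y), mul_comm (Real.sinh y), add_comm y x, add_comm y x'] at this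
    exact this
end

section
/- Define Φ(r) = 2·f(r)²·C² − 3r³(sinh(2r) − 2r), where f(r) = cosh(r)·sin(√2·r) − √2·sinh(r)·cos(√2·r) and C = 1.046. The Taylor expansion of Φ at r = 0 begins 4(C²−1)r⁶ − (4/5)(C²+1)r⁸ + O(r¹⁰); in particular, Φ(r) > 0 for all sufficiently small r > 0. -/
open Real Filter Asymptotics

/-- f(r) = cosh r · sin(√2 r) − √2 sinh r · cos(√2 r) -/
noncomputable def fMV (r : ℝ) : ℝ :=
  Real.cosh r * Real.sin (Real.sqrt 2 * r) -
    Real.sqrt 2 * Real.sinh r * Real.cos (Real.sqrt 2 * r)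

open Finset

/-- Φ(r) = 2 f(r)² C² − 3r³(sinh 2r − 2r) with C = 1.046 -/
noncomputable def PhiMV (r : ℝ) : ℝ :=
  2 * (fMV r) ^ 2 * (1.046 : ℝ) ^ 2 - 3 * r ^ 3 * (Real.sinh (2 * r) - 2 * r)

private lemma Ipows : (Complex.I)^2 = -1 ∧ (Complex.I)^3 = -Complex.I ∧ (Complex.I)^4 = 1
    ∧ (Complex.I)^5 = Complex.I ∧ (Complex.I)^6 = -1 := by
  have h2 : (Complex.I)^2 = -1 := Complex.I_sq
  have h3 : (Complex.I)^3 = -Complex.I := by rw [pow_succ, h2]; ring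
  have h4 : (Complex.I)^4 = 1 := by rw [pow_succ, h3]; simp [Complex.I_mul_I]
  have h5 : (Complex.I)^5 = Complex.I := by rw [pow_succ, h4]; ring
  have h6 : (Complex.I)^6 = -1 := by rw [pow_succ, h5]; simp [Complex.I_mul_I]
  exact ⟨h2, h3, h4, h5, h6⟩

private lemma key_sin (x : ℝ) :
    ((∑ m ∈ range 7, (-(x:ℂ) * Complex.I) ^ m / m.factorial) -
      ∑ m ∈ range 7, ((x:ℂ) * Complex.I) ^ m / m.factorial) * Complex.I / 2
      = ((x - x^3/6 + x^5/120 : ℝ) : ℂ) := by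
  obtain ⟨h2, h3, h4, h5, h6⟩ := Ipows
  simp only [sum_range_succ, range_zero, sum_empty, Nat.factorial]
  push_cast
  ring_nf
  rw [h4, h6]; ring_nf; rw [h2]
  ring

private lemma key_cos (x : ℝ) :
    ((∑ m ∈ range 7, (-(x:ℂ) * Complex.I) ^ m / m.factorial) +
      ∑ m ∈ range 7, ((x:ℂ) * Complex.I) ^ m / m.factorial) / 2
      = ((1 - x^2/2 + x^4/24 - x^6/720 : ℝ) : ℂ) := by
  obtain ⟨h2, h3, h4, h5, h6⟩ := Ipows
  simp only [sum_range_succ, range_zero, sum_empty, Nat.factorial]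
  push_cast
  ring_nf
  rw [h2, h4, h6]
  ring

private lemma expb (z : ℂ) (hz : ‖z‖ ≤ 1) :
    ‖Complex.exp z - ∑ m ∈ range 7, z ^ m / m.factorial‖
      ≤ ‖z‖ ^ 7 / 4410 := by
  have := Complex.exp_bound hz (by norm_num : 0 < 7)
  calc ‖Complex.exp z - ∑ m ∈ range 7, z ^ m / m.factorial‖
      ≤ ‖z‖ ^ 7 * ((7:ℕ).succ * (((7:ℕ).factorial * 7 : ℝ))⁻¹) := this
    _ = ‖z‖ ^ 7 / 4410 := by norm_num [Nat.factorial]; try ring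

private lemma sin_taylor7 {x : ℝ} (hx : |x| ≤ 1) :
    |Real.sin x - (x - x^3/6 + x^5/120)| ≤ |x|^7 / 4410 := by
  have habs : ‖(x:ℂ) * Complex.I‖ = |x| := by
    simp [Complex.norm_real]
  have habs' : ‖-(x:ℂ) * Complex.I‖ = |x| := by
    simp [Complex.norm_real]
  have h1 := expb ((x:ℂ) * Complex.I) (by rw [habs]; exact hx)
  have h2 := expb (-(x:ℂ) * Complex.I) (by rw [habs']; exact hx)
  rw [habs] at h1; rw [habs'] at h2
  have key : (Complex.sin x) - ((x - x^3/6 + x^5/120 : ℝ) : ℂ) =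
      ((Complex.exp (-(x:ℂ) * Complex.I) - ∑ m ∈ range 7, (-(x:ℂ) * Complex.I) ^ m / m.factorial)
        - (Complex.exp ((x:ℂ) * Complex.I) - ∑ m ∈ range 7, ((x:ℂ) * Complex.I) ^ m / m.factorial))
        * Complex.I / 2 := by
    rw [Complex.sin, ← key_sin x]
    ring
  calc |Real.sin x - (x - x^3/6 + x^5/120)|
      = ‖(Complex.sin x) - ((x - x^3/6 + x^5/120 : ℝ) : ℂ)‖ := by
        rw [← Real.norm_eq_abs, ← Complex.norm_real]; push_cast [Complex.ofReal_sin]; ring_nf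
    _ ≤ |x|^7 / 4410 := by
        rw [key]
        rw [norm_div, norm_mul]
        simp only [Complex.norm_I, mul_one, Complex.norm_two]
        calc ‖_ - _‖ / 2 ≤ (|x|^7/4410 + |x|^7/4410) / 2 := by
              gcongr
              exact (norm_sub_le _ _).trans (by gcongr)
          _ = |x|^7 / 4410 := by ring

private lemma cos_taylor7 {x : ℝ} (hx : |x| ≤ 1) :
    |Real.cos x - (1 - x^2/2 + x^4/24 - x^6/720)| ≤ |x|^7 / 4410 := by
  have habs : ‖(x:ℂ) * Complex.I‖ = |x| := by
    simp [Complex.norm_real]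
  have habs' : ‖-(x:ℂ) * Complex.I‖ = |x| := by
    simp [Complex.norm_real]
  have h1 := expb ((x:ℂ) * Complex.I) (by rw [habs]; exact hx)
  have h2 := expb (-(x:ℂ) * Complex.I) (by rw [habs']; exact hx)
  rw [habs] at h1; rw [habs'] at h2
  have key : (Complex.cos x) - ((1 - x^2/2 + x^4/24 - x^6/720 : ℝ) : ℂ) =
      ((Complex.exp (-(x:ℂ) * Complex.I) - ∑ m ∈ range 7, (-(x:ℂ) * Complex.I) ^ m / m.factorial)
        + (Complex.exp ((x:ℂ) * Complex.I) - ∑ m ∈ range 7, ((x:ℂ) * Complex.I) ^ m / m.factorial))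
        / 2 := by
    rw [Complex.cos, ← key_cos x]
    ring
  calc |Real.cos x - (1 - x^2/2 + x^4/24 - x^6/720)|
      = ‖(Complex.cos x) - ((1 - x^2/2 + x^4/24 - x^6/720 : ℝ) : ℂ)‖ := by
        rw [← Real.norm_eq_abs, ← Complex.norm_real]; push_cast [Complex.ofReal_cos]; ring_nf
    _ ≤ |x|^7 / 4410 := by
        rw [key, norm_div]
        simp only [Complex.norm_two]
        calc ‖_ + _‖ / 2 ≤ (|x|^7/4410 + |x|^7/4410) / 2 := by
              gcongr
              exact (norm_add_le _ _).trans (by gcongr)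
          _ = |x|^7 / 4410 := by ring

private lemma expbR {x : ℝ} (hx : |x| ≤ 1) :
    |Real.exp x - ∑ m ∈ range 7, x ^ m / m.factorial| ≤ |x| ^ 7 / 4410 := by
  have := Real.exp_bound hx (by norm_num : 0 < 7)
  calc |Real.exp x - ∑ m ∈ range 7, x ^ m / m.factorial|
      ≤ |x| ^ 7 * ((7:ℕ).succ / ((7:ℕ).factorial * 7 : ℝ)) := this
    _ = |x| ^ 7 / 4410 := by norm_num [Nat.factorial]; try ring

private lemma sinh_taylor7 {x : ℝ} (hx : |x| ≤ 1) :
    |Real.sinh x - (x + x^3/6 + x^5/120)| ≤ |x|^7 / 4410 := by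
  have h1 := expbR hx
  have h2 := expbR (x := -x) (by rwa [abs_neg])
  rw [abs_neg] at h2
  have key : Real.sinh x - (x + x^3/6 + x^5/120) =
      ((Real.exp x - ∑ m ∈ range 7, x ^ m / m.factorial)
        - (Real.exp (-x) - ∑ m ∈ range 7, (-x) ^ m / m.factorial)) / 2 := by
    rw [Real.sinh_eq]
    simp only [sum_range_succ, range_zero, sum_empty, Nat.factorial]
    push_cast
    ring
  rw [key]
  calc |_ / 2| ≤ (|x|^7/4410 + |x|^7/4410)/2 := by
        rw [abs_div, abs_two]
        gcongr
        exact (abs_sub _ _).trans (by gcongr)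
    _ = |x|^7/4410 := by ring

private lemma cosh_taylor7 {x : ℝ} (hx : |x| ≤ 1) :
    |Real.cosh x - (1 + x^2/2 + x^4/24 + x^6/720)| ≤ |x|^7 / 4410 := by
  have h1 := expbR hx
  have h2 := expbR (x := -x) (by rwa [abs_neg])
  rw [abs_neg] at h2
  have key : Real.cosh x - (1 + x^2/2 + x^4/24 + x^6/720) =
      ((Real.exp x - ∑ m ∈ range 7, x ^ m / m.factorial)
        + (Real.exp (-x) - ∑ m ∈ range 7, (-x) ^ m / m.factorial)) / 2 := by
    rw [Real.cosh_eq]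
    simp only [sum_range_succ, range_zero, sum_empty, Nat.factorial]
    push_cast
    ring
  rw [key]
  calc |_ / 2| ≤ (|x|^7/4410 + |x|^7/4410)/2 := by
        rw [abs_div, abs_two]
        gcongr
        exact (abs_add_le _ _).trans (by gcongr)
    _ = |x|^7/4410 := by ring

set_option maxHeartbeats 1000000 in
lemma fMV_approx {r : ℝ} (hr : |r| ≤ 1/2) :
    |fMV r - Real.sqrt 2 * (r^3 - r^5/10)| ≤ (1/50) * |r|^7 := by
  set s := Real.sqrt 2 with hsdef
  have hs : s^2 = 2 := Real.sq_sqrt (by norm_num)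
  have hs0 : 0 ≤ s := Real.sqrt_nonneg 2
  have hsle : s ≤ 1.5 := by nlinarith
  have hrle : |r| ≤ 1 := hr.trans (by norm_num)
  have hsr : |s*r| ≤ 1 := by
    rw [abs_mul, abs_of_nonneg hs0]
    nlinarith [abs_nonneg r]
  have hu0 : 0 ≤ |r| := abs_nonneg r
  have hu2 : |r|^2 ≤ (1/2)^2 := pow_le_pow_left₀ hu0 hr 2
  have hu3 : |r|^3 ≤ (1/2)^3 := pow_le_pow_left₀ hu0 hr 3
  have hu4 : |r|^4 ≤ (1/2)^4 := pow_le_pow_left₀ hu0 hr 4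
  have hu5 : |r|^5 ≤ (1/2)^5 := pow_le_pow_left₀ hu0 hr 5
  have hu6 : |r|^6 ≤ (1/2)^6 := pow_le_pow_left₀ hu0 hr 6
  have hu7 : 0 ≤ |r|^7 := by positivity
  have e2 : r^2 = |r|^2 := (sq_abs r).symm
  have e4 : r^4 = |r|^4 := by rw [← abs_pow, abs_of_nonneg (by positivity)]
  have e6 : r^6 = |r|^6 := by rw [← abs_pow, abs_of_nonneg (by positivity)]
  have hA := cosh_taylor7 hrle
  have hC := sinh_taylor7 hrle
  have hB0 := sin_taylor7 hsr
  have hD0 := cos_taylor7 hsr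
  have hBpoly : s*r - (s*r)^3/6 + (s*r)^5/120 = s*(r - r^3/3 + r^5/30) := by
    linear_combination (-(r^3)/6*s + r^5/120*s*(s^2+2)) * hs
  have hDpoly : 1 - (s*r)^2/2 + (s*r)^4/24 - (s*r)^6/720
      = 1 - r^2 + r^4/6 - r^6/90 := by
    linear_combination (-(r^2)/2 + r^4/24*(s^2+2) - r^6/720*(s^4+2*s^2+4)) * hs
  have hsru : |s*r|^7 ≤ 12 * |r|^7 := by
    rw [abs_mul, abs_of_nonneg hs0, mul_pow]
    have h7 : s^7 = 8*s := by linear_combination (s^5 + 2*s^3 + 4*s) * hs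
    have : s^7 ≤ 12 := by rw [h7]; linarith
    nlinarith [pow_nonneg hs0 7]
  rw [hBpoly] at hB0
  rw [hDpoly] at hD0
  have hB : |Real.sin (s*r) - s*(r - r^3/3 + r^5/30)| ≤ 12*|r|^7/4410 := by
    refine hB0.trans ?_
    rw [div_le_div_iff_of_pos_right (by norm_num)]
    exact hsru
  have hD : |Real.cos (s*r) - (1 - r^2 + r^4/6 - r^6/90)| ≤ 12*|r|^7/4410 := by
    refine hD0.trans ?_
    rw [div_le_div_iff_of_pos_right (by norm_num)]
    exact hsru
  have hPA : |1 + r^2/2 + r^4/24 + r^6/720| ≤ 1.2 := by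
    rw [abs_of_nonneg (by positivity), e2, e4, e6]
    linarith
  have hPC : |r + r^3/6 + r^5/120| ≤ 0.55 := by
    calc |r + r^3/6 + r^5/120| ≤ |r + r^3/6| + |r^5/120| := abs_add_le _ _
      _ ≤ |r| + |r^3/6| + |r^5/120| := by linarith [abs_add_le r (r^3/6)]
      _ = |r| + |r|^3/6 + |r|^5/120 := by
          rw [abs_div, abs_div, abs_pow, abs_pow]; norm_num
      _ ≤ 0.55 := by linarith
  have hsin1 : |Real.sin (s*r)| ≤ 1 := abs_le.2 ⟨Real.neg_one_le_sin _, Real.sin_le_one _⟩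
  have hcos1 : |Real.cos (s*r)| ≤ 1 := abs_le.2 ⟨Real.neg_one_le_cos _, Real.cos_le_one _⟩
  set A := Real.cosh r
  set B := Real.sin (s*r)
  set Cc := Real.sinh r
  set D := Real.cos (s*r)
  set PA := 1 + r^2/2 + r^4/24 + r^6/720 with hPAdef
  set PB := s*(r - r^3/3 + r^5/30) with hPBdef
  set PC := r + r^3/6 + r^5/120 with hPCdef
  set PD := 1 - r^2 + r^4/6 - r^6/90 with hPDdef
  have main : fMV r - s * (r^3 - r^5/10) =
      (A - PA)*B + PA*(B - PB) - s*((Cc - PC)*D + PC*(D - PD))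
        + s*r^7*(-(1/240) + r^2/720 + r^4/7200) := by
    simp only [fMV, hPAdef, hPBdef, hPCdef, hPDdef, hsdef]
    ring
  have t1 : |(A - PA)*B| ≤ |r|^7/4410 := by
    rw [abs_mul]
    calc |A - PA| * |B| ≤ (|r|^7/4410) * 1 :=
          mul_le_mul hA hsin1 (abs_nonneg _) (by positivity)
      _ = |r|^7/4410 := by ring
  have t2 : |PA*(B - PB)| ≤ 1.2*(12*|r|^7/4410) := by
    rw [abs_mul]
    exact mul_le_mul hPA hB (abs_nonneg _) (by norm_num)
  have t3 : |s*((Cc - PC)*D + PC*(D - PD))| ≤ 1.5*(|r|^7/4410 + 0.55*(12*|r|^7/4410)) := by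
    rw [abs_mul, abs_of_nonneg hs0]
    refine mul_le_mul hsle ?_ (abs_nonneg _) (by norm_num)
    refine (abs_add_le _ _).trans ?_
    have b1 : |(Cc - PC)*D| ≤ |r|^7/4410 := by
      rw [abs_mul]
      calc |Cc - PC| * |D| ≤ (|r|^7/4410) * 1 :=
            mul_le_mul hC hcos1 (abs_nonneg _) (by positivity)
        _ = |r|^7/4410 := by ring
    have b2 : |PC*(D - PD)| ≤ 0.55*(12*|r|^7/4410) := by
      rw [abs_mul]
      exact mul_le_mul hPC hD (abs_nonneg _) (by norm_num)
    linarith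
  have t4 : |s*r^7*(-(1/240) + r^2/720 + r^4/7200)| ≤ 1.5*|r|^7*(1/200) := by
    rw [abs_mul, abs_mul, abs_of_nonneg hs0, abs_pow]
    have hlast : |(-(1/240) + r^2/720 + r^4/7200)| ≤ 1/200 := by
      have h4 : 0 ≤ r^4 := by positivity
      rw [abs_le]; constructor
      · linarith [sq_nonneg r]
      · rw [e2, e4]; linarith
    have hs17 : s * |r|^7 ≤ 1.5 * |r|^7 := mul_le_mul_of_nonneg_right hsle hu7
    exact mul_le_mul hs17 hlast (abs_nonneg _) (by positivity)
  calc |fMV r - s * (r^3 - r^5/10)|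
      = |(A - PA)*B + PA*(B - PB) - s*((Cc - PC)*D + PC*(D - PD))
        + s*r^7*(-(1/240) + r^2/720 + r^4/7200)| := by rw [main]
    _ ≤ |(A - PA)*B + PA*(B - PB) - s*((Cc - PC)*D + PC*(D - PD))|
        + |s*r^7*(-(1/240) + r^2/720 + r^4/7200)| := abs_add_le _ _
    _ ≤ |(A - PA)*B + PA*(B - PB)| + |s*((Cc - PC)*D + PC*(D - PD))|
        + |s*r^7*(-(1/240) + r^2/720 + r^4/7200)| := by
          have := abs_sub ((A - PA)*B + PA*(B - PB)) (s*((Cc - PC)*D + PC*(D - PD)))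
          linarith
    _ ≤ |(A - PA)*B| + |PA*(B - PB)| + |s*((Cc - PC)*D + PC*(D - PD))|
        + |s*r^7*(-(1/240) + r^2/720 + r^4/7200)| := by
          have := abs_add_le ((A - PA)*B) (PA*(B - PB))
          linarith
    _ ≤ (1/50) * |r|^7 := by linarith

set_option maxHeartbeats 1000000 in
lemma Phi_err {r : ℝ} (hr : |r| ≤ 1/2) :
    |PhiMV r - (4 * ((1.046:ℝ)^2 - 1) * r^6 - (4/5) * ((1.046:ℝ)^2 + 1) * r^8)|
      ≤ r^10 := by
  set s := Real.sqrt 2 with hsdef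
  have hs : s^2 = 2 := Real.sq_sqrt (by norm_num)
  have hs0 : 0 ≤ s := Real.sqrt_nonneg 2
  have hsle : s ≤ 1.5 := by nlinarith
  have hu0 : 0 ≤ |r| := abs_nonneg r
  have hu2 : |r|^2 ≤ (1/2)^2 := pow_le_pow_left₀ hu0 hr 2
  have hu4 : |r|^4 ≤ (1/2)^4 := pow_le_pow_left₀ hu0 hr 4
  have hu7 : 0 ≤ |r|^7 := by positivity
  have hu10 : 0 ≤ |r|^10 := by positivity
  have e10 : |r|^10 = r^10 := by rw [← abs_pow]; exact abs_of_nonneg (by positivity)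
  -- sinh(2r) bound
  have h2r : |2*r| ≤ 1 := by rw [abs_mul]; rw [abs_two]; linarith
  have hS0 := sinh_taylor7 h2r
  have hSpoly : 2*r + (2*r)^3/6 + (2*r)^5/120 = 2*r + (4/3)*r^3 + (4/15)*r^5 := by ring
  rw [hSpoly] at hS0
  have hSabs : |2*r|^7 = 128*|r|^7 := by rw [abs_mul, abs_two, mul_pow]; norm_num
  rw [hSabs] at hS0
  have hS : |Real.sinh (2*r) - (2*r + (4/3)*r^3 + (4/15)*r^5)| ≤ (1/30)*|r|^7 := by
    refine hS0.trans ?_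
    nlinarith
  have hF := fMV_approx hr
  set F := s * (r^3 - r^5/10) with hFdef
  set ef := fMV r - F with hefdef
  set es := Real.sinh (2*r) - (2*r + (4/3)*r^3 + (4/15)*r^5) with hesdef
  have hFb : |F| ≤ 1.6 * |r|^3 := by
    rw [hFdef, abs_mul, abs_of_nonneg hs0]
    have h1 : |r^3 - r^5/10| ≤ |r|^3 + |r|^5/10 := by
      refine (abs_sub _ _).trans ?_
      rw [abs_div, abs_pow, abs_pow]
      norm_num
    have h2 : |r|^5 ≤ |r|^3 * (1/4) := by
      calc |r|^5 = |r|^3 * |r|^2 := by ring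
        _ ≤ |r|^3 * (1/4) := by
            refine mul_le_mul_of_nonneg_left ?_ (by positivity)
            linarith
    calc s * |r^3 - r^5/10| ≤ 1.5 * (|r|^3 + |r|^5/10) := by
          refine mul_le_mul hsle h1 (abs_nonneg _) (by norm_num)
      _ ≤ 1.6 * |r|^3 := by linarith [pow_nonneg (abs_nonneg r) 3]
  have main : PhiMV r - (4 * ((1.046:ℝ)^2 - 1) * r^6 - (4/5) * ((1.046:ℝ)^2 + 1) * r^8)
      = 2 * (1.046:ℝ)^2 * (2*F*ef + ef^2) - 3*r^3*es + (1.046:ℝ)^2 * r^10 / 25 := by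
    rw [hesdef, hefdef, hFdef]
    simp only [PhiMV]
    linear_combination (2 * (1.046:ℝ)^2 * (r^3 - r^5/10)^2) * hs
  rw [main]
  have hef7 : |ef| ≤ (1/50)*|r|^7 := hF
  have b1 : |2*F*ef| ≤ 2*1.6*|r|^3*((1/50)*|r|^7) := by
    rw [abs_mul, abs_mul, abs_two]
    refine mul_le_mul ?_ hef7 (abs_nonneg _) (by positivity)
    calc 2 * |F| ≤ 2 * (1.6*|r|^3) := by linarith
      _ = 2*1.6*|r|^3 := by ring
  have b2 : |ef^2| ≤ ((1/50)*|r|^7)^2 := by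
    rw [abs_pow]
    exact pow_le_pow_left₀ (abs_nonneg _) hef7 2
  have b3 : |3*r^3*es| ≤ 3*|r|^3*((1/30)*|r|^7) := by
    rw [abs_mul, abs_mul]
    refine mul_le_mul ?_ hS (abs_nonneg _) (by positivity)
    rw [abs_pow]
    norm_num
  -- combine
  have e3 : |r|^3 * |r|^7 = |r|^10 := by ring
  have e14 : (|r|^7)^2 = |r|^10 * |r|^4 := by ring
  have hC : ((1.046:ℝ))^2 ≤ 1.1 := by norm_num
  calc |2 * (1.046:ℝ)^2 * (2*F*ef + ef^2) - 3*r^3*es + (1.046:ℝ)^2 * r^10 / 25|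
      ≤ |2 * (1.046:ℝ)^2 * (2*F*ef + ef^2)| + |3*r^3*es| + |(1.046:ℝ)^2 * r^10 / 25| := by
        have t1 := abs_sub (2 * (1.046:ℝ)^2 * (2*F*ef + ef^2)) (3*r^3*es)
        have t2 := abs_add_le (2 * (1.046:ℝ)^2 * (2*F*ef + ef^2) - 3*r^3*es)
          ((1.046:ℝ)^2 * r^10 / 25)
        linarith
    _ ≤ 2*1.1*(|2*F*ef| + |ef^2|) + 3*|r|^3*((1/30)*|r|^7) + 1.1 * r^10 / 25 := by
        have t3 : |2 * (1.046:ℝ)^2 * (2*F*ef + ef^2)| ≤ 2*1.1*(|2*F*ef| + |ef^2|) := by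
          rw [abs_mul]
          have : |2*F*ef + ef^2| ≤ |2*F*ef| + |ef^2| := abs_add_le _ _
          have h0 : |(2:ℝ) * (1.046:ℝ)^2| = 2 * (1.046:ℝ)^2 := abs_of_nonneg (by norm_num)
          rw [h0]
          refine mul_le_mul (by norm_num) this (abs_nonneg _) (by norm_num)
        have t4 : |(1.046:ℝ)^2 * r^10 / 25| = (1.046:ℝ)^2 * r^10 / 25 := by
          rw [abs_of_nonneg (by positivity)]
        rw [t4]
        have hr10 : (0:ℝ) ≤ r^10 := by positivity
        have t5 : (1.046:ℝ)^2 * r^10 / 25 ≤ 1.1 * r^10 / 25 := by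
          gcongr ?_ * _ / _ <;> norm_num
        linarith
    _ ≤ r^10 := by
        have b1' : |2*F*ef| ≤ 0.064*|r|^10 := by
          refine b1.trans (le_of_eq ?_); ring
        have b2' : |ef^2| ≤ (1/40000)*|r|^10 := by
          refine b2.trans ?_
          calc ((1/50)*|r|^7)^2 = (1/2500)*(|r|^10*|r|^4) := by ring
            _ ≤ (1/2500)*(|r|^10*(1/16)) := by
                refine mul_le_mul_of_nonneg_left ?_ (by norm_num)
                refine mul_le_mul_of_nonneg_left ?_ hu10
                refine hu4.trans (by norm_num)
            _ = (1/40000)*|r|^10 := by ring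
        have e37 : 3*|r|^3*((1/30)*|r|^7) = (1/10)*|r|^10 := by ring
        rw [← e10]
        rw [e37]
        linarith

theorem PhiMV_taylor_and_pos :
    (fun r : ℝ => PhiMV r -
        (4 * ((1.046 : ℝ) ^ 2 - 1) * r ^ 6 - (4 / 5) * ((1.046 : ℝ) ^ 2 + 1) * r ^ 8))
      =O[nhds (0 : ℝ)] (fun r : ℝ => r ^ 10) ∧
    ∃ r₀ > (0 : ℝ), ∀ r : ℝ, 0 < r → r < r₀ → 0 < PhiMV r := by
  have hmem : ∀ᶠ r : ℝ in nhds 0, |r| ≤ 1/2 := by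
    filter_upwards [Metric.closedBall_mem_nhds (0:ℝ) (by norm_num : (0:ℝ) < 1/2)] with r hr
    simpa [Real.dist_eq] using hr
  constructor
  · refine Asymptotics.IsBigO.of_bound 1 ?_
    filter_upwards [hmem] with r hr
    rw [one_mul, Real.norm_eq_abs, Real.norm_eq_abs]
    exact (Phi_err hr).trans (le_abs_self _)
  · refine ⟨0.4, by norm_num, fun r hr0 hr4 => ?_⟩
    have habs : |r| ≤ 1/2 := by rw [abs_of_pos hr0]; linarith
    have h := (abs_le.1 (Phi_err habs)).1
    have hr2 : r^2 ≤ 0.16 := by nlinarith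
    have hr4' : r^4 ≤ 0.0256 := by nlinarith [sq_nonneg r]
    have h6 : 0 < r^6 := by positivity
    nlinarith [mul_le_mul_of_nonneg_left hr2 h6.le, mul_le_mul_of_nonneg_left hr4' h6.le]
end
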